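/- Let $H_1, \ldots, H_r$ be connected graphs on disjoint vertex sets with $r \geq 2$, and let $G = \mathrm{cone}(v, \bigsqcup_{i=1}^r H_i)$ be the cone of a new vertex $v$ over their disjoint union. Then $c_G(T) = |T| + 1$ for all $T \in \mathcal{C}(G)$ if and only if $r = 2$ and $c_{H_i}(T_i) = |T_i| + 1$ for all $T_i \in \mathcal{C}(H_i)$ and $i = 1, \ldots, r$. -/

import Mathlib

open SimpleGraph Set

/-- Number of connected components of the induced subgraph of `G` on `s`. -/
noncomputable def nc {V : Type*} (G : SimpleGraph V) (s : Set V) : ℕ :=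
  Nat.card (G.induce s).ConnectedComponent

/-- `T` has the cut point property for `G`: every `i ∈ T` is a cut point of the
induced subgraph on `Tᶜ ∪ {i}` (removing `i` increases the number of components). -/
def CutPointProperty {V : Type*} (G : SimpleGraph V) (T : Set V) : Prop :=
  ∀ i ∈ T, nc G (Tᶜ ∪ {i}) < nc G Tᶜ

/-- The join `G₁ * G₂` of two graphs on disjoint vertex sets. -/
def joinGraph {V₁ V₂ : Type*} (G₁ : SimpleGraph V₁) (G₂ : SimpleGraph V₂) :
    SimpleGraph (V₁ ⊕ V₂) where
  Adj v w :=
    match v, w with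
    | Sum.inl a, Sum.inl b => G₁.Adj a b
    | Sum.inr a, Sum.inr b => G₂.Adj a b
    | Sum.inl _, Sum.inr _ => True
    | Sum.inr _, Sum.inl _ => True
  symm := by constructor; rintro (a | a) (b | b) h <;> simp_all <;> exact h.symm
  loopless := by constructor; rintro (a | a) h <;> simp_all

/-- Disjoint union of an indexed family of graphs. -/
def sigmaGraph {ι : Type*} {V : ι → Type*} (G : ∀ i, SimpleGraph (V i)) :
    SimpleGraph (Σ i, V i) where
  Adj v w := ∃ h : v.1 = w.1, (G w.1).Adj (h ▸ v.2) w.2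
  symm := by
    constructor
    rintro ⟨i, a⟩ ⟨j, b⟩ ⟨h, hab⟩
    dsimp at h hab ⊢
    subst h
    exact ⟨rfl, hab.symm⟩
  loopless := by
    constructor
    rintro ⟨i, a⟩ ⟨h, hab⟩
    dsimp at h hab
    exact (G i).irrefl hab
/-- The corona `H ⊙ H'`: one copy of `H'` for each vertex `v` of `H`,
with every vertex of the copy joined to `v`. -/
def coronaGraph {V₁ V₂ : Type*} (H : SimpleGraph V₁) (H' : SimpleGraph V₂) :
    SimpleGraph (V₁ ⊕ V₁ × V₂) where
  Adj v w :=
    match v, w with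
    | Sum.inl a, Sum.inl b => H.Adj a b
    | Sum.inl a, Sum.inr p => a = p.1
    | Sum.inr p, Sum.inl b => p.1 = b
    | Sum.inr p, Sum.inr q => p.1 = q.1 ∧ H'.Adj p.2 q.2
  symm := by
    constructor
    rintro (a | p) (b | q) h <;> dsimp at h ⊢
    · exact h.symm
    · exact h.symm
    · exact h.symm
    · exact ⟨h.1.symm, h.2.symm⟩
  loopless := by constructor; rintro (a | p) h <;> simp_all

/-- The whisker graph `W(H)`: a pendant vertex attached to each vertex of `H`. -/
def whiskerGraph {V : Type*} (H : SimpleGraph V) : SimpleGraph (V ⊕ V) where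
  Adj v w :=
    match v, w with
    | Sum.inl a, Sum.inl b => H.Adj a b
    | Sum.inl a, Sum.inr b => a = b
    | Sum.inr a, Sum.inl b => a = b
    | Sum.inr _, Sum.inr _ => False
  symm := by constructor; rintro (a | a) (b | b) h <;> simp_all; exact h.symm
  loopless := by constructor; rintro (a | a) h <;> simp_all

/-- `F` is (the vertex set of) a maximal clique of `G`. -/
def MaxClique {V : Type*} (G : SimpleGraph V) (F : Set V) : Prop :=
  Maximal G.IsClique F

/-- A graph is chordal if every cycle of length at least 4 has a chord. -/
def IsChordal {V : Type*} (G : SimpleGraph V) : Prop :=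
  ∀ (n : ℕ), 4 ≤ n → ∀ c : ℕ → V, Set.InjOn c (Set.Iio n) →
    (∀ i < n, G.Adj (c i) (c ((i + 1) % n))) →
    ∃ i < n, ∃ j < n, j ≠ i ∧ j ≠ (i + 1) % n ∧ i ≠ (j + 1) % n ∧ G.Adj (c i) (c j)

/-- A generalized block graph: a connected chordal graph in which any three distinct
maximal cliques with nonempty common intersection have all pairwise intersections equal. -/
def GenBlockGraph {V : Type*} (G : SimpleGraph V) : Prop :=
  G.Connected ∧ IsChordal G ∧
    ∀ F₁ F₂ F₃ : Set V, MaxClique G F₁ → MaxClique G F₂ → MaxClique G F₃ →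
      F₁ ≠ F₂ → F₁ ≠ F₃ → F₂ ≠ F₃ → (F₁ ∩ F₂ ∩ F₃).Nonempty →
      F₁ ∩ F₂ = F₁ ∩ F₃ ∧ F₁ ∩ F₂ = F₂ ∩ F₃

/-- `A` is a cut set of `G`: deleting `A` increases the number of connected components. -/
def IsCutSet {V : Type*} (G : SimpleGraph V) (A : Set V) : Prop :=
  nc G Set.univ < nc G Aᶜ

/-- `A` is an inclusion-minimal cut set of `G`. -/
def IsMinCutSet {V : Type*} (G : SimpleGraph V) (A : Set V) : Prop :=
  IsCutSet G A ∧ ∀ B ⊂ A, ¬ IsCutSet G B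

/-- `A` is a `t`-minimal cut set of `G`: a minimal cut set which is the common
intersection of exactly `t` maximal cliques of `G` and disjoint from all other
maximal cliques. -/
def IsTMinCut {V : Type*} (G : SimpleGraph V) (t : ℕ) (A : Set V) : Prop :=
  IsMinCutSet G A ∧
  {F : Set V | MaxClique G F ∧ A ⊆ F}.ncard = t ∧
  ⋂₀ {F : Set V | MaxClique G F ∧ A ⊆ F} = A ∧
  ∀ F : Set V, MaxClique G F → ¬ A ⊆ F → F ∩ A = ∅

/-- `B` is a branch of the facet `F` in the clique complex of `G`. -/
def IsBranch {V : Type*} (G : SimpleGraph V) (F B : Set V) : Prop :=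
  MaxClique G B ∧ B ≠ F ∧ ∀ H : Set V, MaxClique G H → H ≠ F → H ∩ F ⊆ B ∩ F

/-- `F` is a leaf of the clique complex of `G`. -/
def IsLeafClique {V : Type*} (G : SimpleGraph V) (F : Set V) : Prop :=
  MaxClique G F ∧ ((∀ F' : Set V, MaxClique G F' → F' = F) ∨ ∃ B, IsBranch G F B)


section Aux

variable {ι : Type*} {W : ι → Type*} (Gs : ∀ i, SimpleGraph (W i))

lemma sigma_walk_fst : ∀ {x y : Σ i, W i}, (sigmaGraph Gs).Walk x y →
    ∃ h : x.1 = y.1, (Gs y.1).Reachable (h ▸ x.2) y.2 := by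
  intro x y w
  induction w with
  | nil => exact ⟨rfl, Reachable.refl _⟩
  | @cons a b c hadj p ih =>
      obtain ⟨i, xa⟩ := a
      obtain ⟨j, xb⟩ := b
      obtain ⟨k, xc⟩ := c
      obtain ⟨h1, h1a⟩ := hadj
      obtain ⟨h2, h2a⟩ := ih
      dsimp at h1 h2 ⊢
      subst h1
      subst h2
      exact ⟨rfl, (SimpleGraph.Adj.reachable h1a).trans h2a⟩

/-- Graph hom from a summand into the disjoint union. -/
def sigmaHom (i : ι) : Gs i →g sigmaGraph Gs where
  toFun a := ⟨i, a⟩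
  map_rel' := fun h => ⟨rfl, h⟩

noncomputable def sigmaCCEquiv :
    (sigmaGraph Gs).ConnectedComponent ≃ Σ i, (Gs i).ConnectedComponent where
  toFun := ConnectedComponent.lift (fun x => ⟨x.1, (Gs x.1).connectedComponentMk x.2⟩)
    (by
      intro v w p _
      obtain ⟨h, hr⟩ := sigma_walk_fst Gs p
      obtain ⟨i, a⟩ := v
      obtain ⟨j, b⟩ := w
      dsimp at h ⊢
      subst h
      exact congrArg (Sigma.mk i) (ConnectedComponent.sound hr))
  invFun p := ConnectedComponent.lift (fun a => (sigmaGraph Gs).connectedComponentMk ⟨p.1, a⟩)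
    (fun v w q _ => ConnectedComponent.sound (q.reachable.map (sigmaHom Gs p.1))) p.2
  left_inv := by
    refine ConnectedComponent.ind ?_
    rintro ⟨i, a⟩
    rfl
  right_inv := by
    rintro ⟨i, c⟩
    refine ConnectedComponent.ind (fun a => rfl) c

lemma nat_card_sigma {κ : Type*} [Fintype κ] {β : κ → Type*} [∀ i, Finite (β i)] :
    Nat.card (Σ i, β i) = ∑ i, Nat.card (β i) := by
  letI : ∀ i, Fintype (β i) := fun i => Fintype.ofFinite _
  simp [Nat.card_eq_fintype_card, Fintype.card_sigma]

/-- the induced subgraph of a disjoint union is the disjoint union of induced subgraphs -/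
def induceSigmaIso (s : Set (Σ i, W i)) :
    (sigmaGraph Gs).induce s ≃g
      sigmaGraph (fun i => (Gs i).induce {a | (⟨i, a⟩ : Σ i, W i) ∈ s}) where
  toFun x := ⟨x.1.1, x.1.2, x.2⟩
  invFun p := ⟨⟨p.1, p.2.1⟩, p.2.2⟩
  left_inv := by rintro ⟨⟨i, a⟩, h⟩; rfl
  right_inv := by rintro ⟨i, a, h⟩; rfl
  map_rel_iff' := by
    rintro ⟨⟨i, a⟩, ha⟩ ⟨⟨j, b⟩, hb⟩
    constructor
    · rintro ⟨h, hadj⟩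
      dsimp at h
      subst h
      exact ⟨rfl, hadj⟩
    · rintro ⟨h, hadj⟩
      dsimp at h
      subst h
      exact ⟨rfl, hadj⟩

lemma nc_of_connected {α : Type*} {G : SimpleGraph α} {s : Set α}
    (h : (G.induce s).Connected) : nc G s = 1 := by
  have h1 : Subsingleton (G.induce s).ConnectedComponent :=
    h.preconnected.subsingleton_connectedComponent
  have h2 : Nonempty (G.induce s).ConnectedComponent :=
    h.nonempty.map (G.induce s).connectedComponentMk
  exact Nat.card_eq_one_iff_unique.mpr ⟨h1, h2⟩

lemma nc_univ_eq_one {α : Type*} {G : SimpleGraph α} (h : G.Connected) :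
    nc G univ = 1 := by
  unfold nc
  rw [Nat.card_congr (Iso.connectedComponentEquiv (induceUnivIso G))]
  have h1 : Subsingleton G.ConnectedComponent := h.preconnected.subsingleton_connectedComponent
  have h2 : Nonempty G.ConnectedComponent := h.nonempty.map G.connectedComponentMk
  exact Nat.card_eq_one_iff_unique.mpr ⟨h1, h2⟩

lemma nc_pos {α : Type*} [Finite α] {G : SimpleGraph α} {s : Set α} (hs : s.Nonempty) :
    1 ≤ nc G s := by
  obtain ⟨x, hx⟩ := hs
  have h2 : Nonempty (G.induce s).ConnectedComponent :=
    ⟨(G.induce s).connectedComponentMk ⟨x, hx⟩⟩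
  exact Nat.card_pos

end Aux

section Join

variable {r : ℕ} {V : Fin r → Type*} [∀ i, Fintype (V i)] (H : ∀ i, SimpleGraph (V i))

lemma connected_induce_join (s : Set (Unit ⊕ Σ i, V i)) (hs : Sum.inl () ∈ s) :
    ((joinGraph (⊥ : SimpleGraph Unit) (sigmaGraph H)).induce s).Connected := by
  rw [connected_iff]
  refine ⟨?_, ⟨⟨Sum.inl (), hs⟩⟩⟩
  have key : ∀ x : ↥s, ((joinGraph (⊥ : SimpleGraph Unit) (sigmaGraph H)).induce s).Reachable
      x ⟨Sum.inl (), hs⟩ := by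
    rintro ⟨(u | y), hx⟩
    · cases u; exact Reachable.refl _
    · exact SimpleGraph.Adj.reachable trivial
  intro x y
  exact (key x).trans (key y).symm

lemma nc_join_inl (s : Set (Unit ⊕ Σ i, V i)) (hs : Sum.inl () ∈ s) :
    nc (joinGraph (⊥ : SimpleGraph Unit) (sigmaGraph H)) s = 1 :=
  nc_of_connected (connected_induce_join H s hs)

def joinIso (s : Set (Unit ⊕ Σ i, V i)) (hs : Sum.inl () ∉ s) :
    (joinGraph (⊥ : SimpleGraph Unit) (sigmaGraph H)).induce s ≃g
      (sigmaGraph H).induce {y | Sum.inr y ∈ s} where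
  toFun x := match x with
    | ⟨Sum.inr y, h⟩ => ⟨y, h⟩
    | ⟨Sum.inl (), h⟩ => absurd h hs
  invFun y := ⟨Sum.inr y.1, y.2⟩
  left_inv := by
    rintro ⟨(⟨⟩ | y), h⟩
    · exact absurd h hs
    · rfl
  right_inv := by rintro ⟨y, h⟩; rfl
  map_rel_iff' := by
    rintro ⟨(⟨⟩ | y), h⟩ ⟨(⟨⟩ | y'), h'⟩
    · exact absurd h hs
    · exact absurd h hs
    · exact absurd h' hs
    · exact Iff.rfl

lemma nc_join_notinl (s : Set (Unit ⊕ Σ i, V i)) (hs : Sum.inl () ∉ s) :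
    nc (joinGraph (⊥ : SimpleGraph Unit) (sigmaGraph H)) s
      = ∑ i, nc (H i) {a | Sum.inr ⟨i, a⟩ ∈ s} := by
  unfold nc
  rw [Nat.card_congr (Iso.connectedComponentEquiv (joinIso H s hs)),
      Nat.card_congr (Iso.connectedComponentEquiv (induceSigmaIso (fun i => H i) {y | Sum.inr y ∈ s})),
      Nat.card_congr (sigmaCCEquiv _), nat_card_sigma]
  rfl

def subtypeSumEquiv {α β : Type*} (p : α ⊕ β → Prop) :
    {x // p x} ≃ {a // p (Sum.inl a)} ⊕ {b // p (Sum.inr b)} where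
  toFun x := match x with
    | ⟨Sum.inl a, h⟩ => Sum.inl ⟨a, h⟩
    | ⟨Sum.inr b, h⟩ => Sum.inr ⟨b, h⟩
  invFun x := match x with
    | Sum.inl ⟨a, h⟩ => ⟨Sum.inl a, h⟩
    | Sum.inr ⟨b, h⟩ => ⟨Sum.inr b, h⟩
  left_inv := by rintro ⟨(a | b), h⟩ <;> rfl
  right_inv := by rintro (⟨a, h⟩ | ⟨b, h⟩) <;> rfl

def subtypeSigmaEquiv' {κ : Type*} {β : κ → Type*} (p : (Σ i, β i) → Prop) :
    {x // p x} ≃ Σ i, {a // p ⟨i, a⟩} where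
  toFun x := ⟨x.1.1, x.1.2, x.2⟩
  invFun x := ⟨⟨x.1, x.2.1⟩, x.2.2⟩
  left_inv := by rintro ⟨⟨i, a⟩, h⟩; rfl
  right_inv := by rintro ⟨i, a, h⟩; rfl

lemma ncard_decomp (T : Set (Unit ⊕ Σ i, V i)) (hT : Sum.inl () ∈ T) :
    T.ncard = 1 + ∑ i, {a : V i | Sum.inr ⟨i, a⟩ ∈ T}.ncard := by
  classical
  rw [← Nat.card_coe_set_eq]
  rw [Nat.card_congr (subtypeSumEquiv (· ∈ T))]
  rw [Nat.card_sum]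
  congr 1
  · refine Nat.card_eq_one_iff_unique.mpr ⟨⟨?_⟩, ⟨⟨(), hT⟩⟩⟩
    rintro ⟨⟨⟩, h⟩ ⟨⟨⟩, h'⟩
    rfl
  · rw [Nat.card_congr (subtypeSigmaEquiv' (fun y => Sum.inr y ∈ T)), nat_card_sigma]
    exact Finset.sum_congr rfl (fun i _ => Nat.card_coe_set_eq _)

end Join


set_option maxHeartbeats 2000000 in
/-- the cone over a disjoint union of `r ≥ 2` connected graphs is unmixed
(in the Rauf–Rinaldo sense) iff `r = 2` and each summand is unmixed. -/
theorem stmt10 {r : ℕ} (hr : 2 ≤ r) {V : Fin r → Type*} [∀ i, Fintype (V i)]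
    (H : ∀ i, SimpleGraph (V i)) (hH : ∀ i, (H i).Connected) :
    (∀ T : Set (Unit ⊕ Σ i, V i),
        CutPointProperty (joinGraph (⊥ : SimpleGraph Unit) (sigmaGraph H)) T →
        nc (joinGraph (⊥ : SimpleGraph Unit) (sigmaGraph H)) Tᶜ = T.ncard + 1) ↔
      (r = 2 ∧ ∀ i, ∀ Ti : Set (V i), CutPointProperty (H i) Ti →
        nc (H i) Tiᶜ = Ti.ncard + 1) := by
  classical
  constructor
  · intro P
    -- first, r = 2
    have hncU : nc (joinGraph (⊥ : SimpleGraph Unit) (sigmaGraph H))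
        (({Sum.inl ()} : Set (Unit ⊕ Σ i, V i))ᶜ) = r := by
      rw [nc_join_notinl H _ (by simp)]
      have he : ∀ i : Fin r,
          {a : V i | Sum.inr ⟨i, a⟩ ∈ (({Sum.inl ()} : Set (Unit ⊕ Σ i, V i))ᶜ)} = univ := by
        intro i; ext a; simp
      calc ∑ i, nc (H i) {a : V i | Sum.inr ⟨i, a⟩ ∈ (({Sum.inl ()} : Set (Unit ⊕ Σ i, V i))ᶜ)}
          = ∑ _i : Fin r, 1 :=
            Finset.sum_congr rfl (fun i _ => by rw [he i, nc_univ_eq_one (hH i)])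
        _ = r := by simp
    have hr2 : r = 2 := by
      have hcpp : CutPointProperty (joinGraph (⊥ : SimpleGraph Unit) (sigmaGraph H))
          {Sum.inl ()} := by
        intro w hw
        rw [Set.mem_singleton_iff] at hw
        subst hw
        have h1 : (({Sum.inl ()} : Set (Unit ⊕ Σ i, V i))ᶜ ∪ {Sum.inl ()}) = univ :=
          Set.compl_union_self _
        rw [h1, nc_join_inl H univ (mem_univ _), hncU]
        omega
      have := P {Sum.inl ()} hcpp
      rw [hncU, Set.ncard_singleton] at this
      omega
    refine ⟨hr2, fun i Ti hTi => ?_⟩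
    by_cases hTe : Ti = ∅
    · subst hTe
      rw [compl_empty, nc_univ_eq_one (hH i)]
      simp
    · obtain ⟨x0, hx0⟩ := Set.nonempty_iff_ne_empty.mpr hTe
      have hinj : Function.Injective (fun a : V i => (Sum.inr ⟨i, a⟩ : Unit ⊕ Σ i, V i)) := by
        intro a b hab
        simpa using hab
      set T : Set (Unit ⊕ Σ i, V i) :=
        insert (Sum.inl ()) ((fun a => Sum.inr ⟨i, a⟩) '' Ti) with hTdef
      have hvT : Sum.inl () ∈ T := by simp [hTdef]
      have hvTc : Sum.inl () ∉ Tᶜ := by simp [hvT]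
      have hslice : ∀ j : Fin r, j ≠ i → {a : V j | Sum.inr ⟨j, a⟩ ∈ Tᶜ} = univ := by
        intro j hj; ext a
        simp only [hTdef, mem_setOf_eq, mem_compl_iff, mem_insert_iff, mem_image, mem_univ,
          iff_true]
        rintro (h | ⟨b, _, h⟩)
        · exact absurd h (by simp)
        · rw [Sum.inr.injEq, Sigma.mk.inj_iff] at h
          exact hj h.1.symm
      have hslicei : {a : V i | Sum.inr ⟨i, a⟩ ∈ Tᶜ} = Tiᶜ := by
        ext a
        simp [hTdef, Sigma.mk.inj_iff]
      have hsliceU : ∀ x : V i, ∀ j : Fin r, j ≠ i →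
          {a : V j | Sum.inr ⟨j, a⟩ ∈ Tᶜ ∪ {Sum.inr ⟨i, x⟩}} = univ := by
        intro x j hj; ext a
        simp only [mem_setOf_eq, mem_union, mem_univ, iff_true]
        left
        have := hslice j hj
        rw [Set.ext_iff] at this
        exact (this a).mpr (mem_univ a)
      have hsliceUi : ∀ x : V i,
          {a : V i | Sum.inr ⟨i, a⟩ ∈ Tᶜ ∪ {Sum.inr ⟨i, x⟩}} = Tiᶜ ∪ {x} := by
        intro x; ext a
        have := Set.ext_iff.mp hslicei a
        simp only [mem_setOf_eq, mem_union, mem_singleton_iff, Sum.inr.injEq,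
          Sigma.mk.inj_iff, heq_eq_eq, true_and] at this ⊢
        rw [this]
      have hsum : ∀ g : Fin r → ℕ, (∀ j, j ≠ i → g j = 1) → ∑ j, g j = g i + (r - 1) := by
        intro g hg
        rw [← Finset.add_sum_erase _ g (Finset.mem_univ i)]
        congr 1
        rw [Finset.sum_congr rfl (fun j hj => hg j (Finset.ne_of_mem_erase hj))]
        simp [Finset.card_erase_of_mem]
      have h2le : 2 ≤ nc (H i) Tiᶜ := by
        have hlt := hTi x0 hx0
        have h1 : 1 ≤ nc (H i) (Tiᶜ ∪ {x0}) := nc_pos ⟨x0, by simp⟩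
        omega
      have hcpp : CutPointProperty (joinGraph (⊥ : SimpleGraph Unit) (sigmaGraph H)) T := by
        intro w hw
        rw [hTdef, Set.mem_insert_iff, Set.mem_image] at hw
        rcases hw with rfl | ⟨b, hb, rfl⟩
        · rw [nc_join_inl H (Tᶜ ∪ {Sum.inl ()}) (by simp), nc_join_notinl H Tᶜ hvTc,
            hsum _ (fun j hj => by rw [hslice j hj, nc_univ_eq_one (hH j)]), hslicei]
          omega
        · rw [nc_join_notinl H (Tᶜ ∪ {Sum.inr ⟨i, b⟩}) (by simp [hvT]), nc_join_notinl H Tᶜ hvTc]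
          apply Finset.sum_lt_sum
          · intro j _
            by_cases hji : j = i
            · subst hji
              rw [hsliceUi b, hslicei]
              exact le_of_lt (hTi b hb)
            · rw [hsliceU b j hji, hslice j hji]
          · exact ⟨i, Finset.mem_univ i, by
              rw [hsliceUi b, hslicei]
              exact hTi b hb⟩
      have hfinal := P T hcpp
      rw [nc_join_notinl H Tᶜ hvTc,
        hsum _ (fun j hj => by rw [hslice j hj, nc_univ_eq_one (hH j)]), hslicei] at hfinal
      have hcard : T.ncard = 1 + Ti.ncard := by
        rw [hTdef, Set.ncard_insert_of_notMem (by simp),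
          Set.ncard_image_of_injective _ hinj]
        omega
      rw [hcard] at hfinal
      omega
  · rintro ⟨hr2, hunm⟩ T hT
    by_cases hv : Sum.inl () ∈ T
    · have hTc : Sum.inl () ∉ Tᶜ := by simp [hv]
      have hcppj : ∀ j : Fin r, CutPointProperty (H j) {a : V j | Sum.inr ⟨j, a⟩ ∈ T} := by
        intro j x hx
        have hw := hT (Sum.inr ⟨j, x⟩) hx
        rw [nc_join_notinl H (Tᶜ ∪ {Sum.inr ⟨j, x⟩}) (by simp [hv]), nc_join_notinl H Tᶜ hTc] at hw
        have e1 : ∀ k : Fin r, k ≠ j →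
            {a : V k | Sum.inr ⟨k, a⟩ ∈ Tᶜ ∪ {Sum.inr ⟨j, x⟩}} =
              {a : V k | Sum.inr ⟨k, a⟩ ∈ Tᶜ} := by
          intro k hk; ext a
          simp only [mem_setOf_eq, mem_union, mem_singleton_iff, Sum.inr.injEq,
            Sigma.mk.inj_iff]
          constructor
          · rintro (h | ⟨h, -⟩)
            · exact h
            · exact absurd h hk
          · exact Or.inl
        have e2 : {a : V j | Sum.inr ⟨j, a⟩ ∈ Tᶜ ∪ {Sum.inr ⟨j, x⟩}} =
            {a : V j | Sum.inr ⟨j, a⟩ ∈ T}ᶜ ∪ {x} := by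
          ext a
          simp [Sigma.mk.inj_iff]
        rw [← Finset.add_sum_erase _ _ (Finset.mem_univ j),
          ← Finset.add_sum_erase _ _ (Finset.mem_univ j)] at hw
        rw [Finset.sum_congr rfl
          (fun k hk => by rw [e1 k (Finset.ne_of_mem_erase hk)])] at hw
        have hlt := Nat.lt_of_add_lt_add_right hw
        rw [e2] at hlt
        exact hlt
      rw [nc_join_notinl H Tᶜ hTc]
      have heq : ∀ j : Fin r, nc (H j) {a : V j | Sum.inr ⟨j, a⟩ ∈ Tᶜ} =
          {a : V j | Sum.inr ⟨j, a⟩ ∈ T}.ncard + 1 := by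
        intro j
        have : {a : V j | Sum.inr ⟨j, a⟩ ∈ Tᶜ} = {a : V j | Sum.inr ⟨j, a⟩ ∈ T}ᶜ := rfl
        rw [this]
        exact hunm j _ (hcppj j)
      rw [Finset.sum_congr rfl (fun j _ => heq j), Finset.sum_add_distrib,
        ncard_decomp T hv]
      have h1 : ∑ _j : Fin r, 1 = r := by simp
      rw [h1]
      omega
    · have hTempty : T = ∅ := by
        by_contra h
        obtain ⟨t, ht⟩ := Set.nonempty_iff_ne_empty.mpr h
        have hlt := hT t ht
        rw [nc_join_inl H (Tᶜ ∪ {t}) (Set.mem_union_left _ (by simp [hv])),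
          nc_join_inl H Tᶜ (by simp [hv])] at hlt
        exact lt_irrefl 1 hlt
      rw [hTempty, compl_empty, nc_join_inl H univ (mem_univ _)]
      simp
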